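/- arXiv:2510.12893 — 4 statements merged into one kernel-verified Lean document; each statement's English description precedes it below -/
import Mathlib

section
/- Let S_K ⊆ O_K^× be a finite set closed under inversion and let c_S > 0 be a constant with c_S < h_∞(β) for every β ∈ O_K^× ∖ S_K. Then for every η ∈ ℝ^{r₁+r₂} with Σ_j η_j ≥ 0 and every X ≥ 0, the number of units β ∈ O_K^× with h̃(η + L(β)) ≤ X is at most #S_K · ((X + c_S/2)/(c_S/2))^{r₁+r₂−1}. -/
open NumberField MeasureTheory
open scoped ENNReal Classical nonZeroDivisors

noncomputable section

variable (K : Type*) [Field K] [NumberField K]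

/-- `h_∞(α) = (1/d) Σ_σ max(0, log|σ(α)|)`, sum over all complex embeddings of `K`. -/
def hInf (α : K) : ℝ :=
  (Module.finrank ℚ K : ℝ)⁻¹ * ∑ σ : K →+* ℂ, max 0 (Real.log ‖σ α‖)

/-- The ring of integers of `K` as an additive subgroup of `K`. -/
def intSub : AddSubgroup K := (algebraMap (𝓞 K) K).range.toAddSubgroup

/-- `D(α) = [O_K : O_K ∩ α⁻¹ O_K]`. -/
def Dden (α : K) : ℕ :=
  (AddSubgroup.map (AddMonoidHom.mulLeft α⁻¹) (intSub K)).relIndex (intSub K)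

/-- `N(α) = |N_{K/ℚ}(α)|`. -/
def Nabs (α : K) : ℝ := |((Algebra.norm ℚ α : ℚ) : ℝ)|

/-- The absolute logarithmic Weil height `h(α) = h_∞(α) + (1/d) log D(α)`. -/
def heightW (α : K) : ℝ :=
  hInf K α + (Module.finrank ℚ K : ℝ)⁻¹ * Real.log (Dden K α)

/-- `α` is a root of unity. -/
def IsRootOfUnity (α : K) : Prop := ∃ n : ℕ, 0 < n ∧ α ^ n = 1

/-- `ω_K`, the number of roots of unity in `K`. -/
def omegaK : ℕ := Nat.card {ζ : K // IsRootOfUnity K ζ}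

/-- The squared Euclidean norm on `K_ℝ = ℝ^{r₁} × ℂ^{r₂}`:
`‖x‖² = Σ_{w real} x_w² + 2 Σ_{w complex} |x_w|²`. -/
def eNormSq (x : mixedEmbedding.mixedSpace K) : ℝ :=
  (∑ w, (x.1 w) ^ 2) + 2 * ∑ w, Complex.normSq (x.2 w)

/-- The origin-centered Euclidean ball of radius `R` in `K_ℝ^t`. -/
def eBall (t : ℕ) (R : ℝ) : Set (Fin t → mixedEmbedding.mixedSpace K) :=
  {x | ∑ i, eNormSq K (x i) ≤ R ^ 2}

/-- Coordinatewise multiplication by (the canonical embedding of) `α` of a subset of `K_ℝ^t`. -/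
def smulSet (α : K) (t : ℕ) (S : Set (Fin t → mixedEmbedding.mixedSpace K)) :
    Set (Fin t → mixedEmbedding.mixedSpace K) :=
  (fun x i => mixedEmbedding K α * x i) '' S

/-- The Dedekind zeta function `ζ_K(s) = Σ_I N(I)^{-s}`, summed over nonzero integral ideals. -/
def zetaK (s : ℝ) : ℝ :=
  ∑' I : {I : Ideal (𝓞 K) // I ≠ ⊥}, (Ideal.absNorm I.1 : ℝ) ^ (-s)

end

/-- The logarithmic embedding `L : K^× → ℝ^{r₁+r₂}` (indexed by the infinite places),
with coordinate `log|σ(α)|` at a real place and `2 log|σ(α)|` at a complex place. -/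
noncomputable def logEmb {K : Type*} [Field K] [NumberField K] (α : K) :
    InfinitePlace K → ℝ :=
  fun w => (w.mult : ℝ) * Real.log (w α)

/-- `h̃(x) = (1/d) Σ_j max(0, x_j)` on `ℝ^{r₁+r₂}`. -/
noncomputable def hTil (K : Type*) [Field K] [NumberField K] (x : InfinitePlace K → ℝ) : ℝ :=
  (Module.finrank ℚ K : ℝ)⁻¹ * ∑ w, max 0 (x w)


open scoped Pointwise

section PNrm

noncomputable def pNrm {ι : Type*} [Fintype ι] (y : ι → ℝ) : ℝ :=
  ((∑ i, |y i|) + |∑ i, y i|) / 2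

variable {ι : Type*} [Fintype ι]

lemma sum_abs_eq_helper (f : ι → ℝ) :
    ∑ i, |f i| = 2 * (∑ i, max 0 (f i)) - ∑ i, f i := by
  rw [Finset.mul_sum, ← Finset.sum_sub_distrib]
  refine Finset.sum_congr rfl fun i _ => ?_
  rcases le_total (f i) 0 with h | h
  · rw [abs_of_nonpos h, max_eq_left h]; ring
  · rw [abs_of_nonneg h, max_eq_right h]; ring

lemma sum_subtype_ne (a : ι) (f : ι → ℝ) :
    ∑ i : {x // x ≠ a}, f i.1 = (∑ i, f i) - f a := by
  have h : ∑ i ∈ ({a}ᶜ : Finset ι), f i = ∑ i : {x : ι // x ≠ a}, f i.1 :=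
    Finset.sum_subtype ({a}ᶜ : Finset ι) (fun x => by simp) f
  rw [← h, Fintype.sum_eq_add_sum_compl a f]
  ring

lemma pNrm_subtype_bound (i₀ : ι) (a : ι → ℝ) (hs : 0 ≤ ∑ i, a i) :
    pNrm (fun i : {j // j ≠ i₀} => a i.1) ≤ ∑ i, max 0 (a i) := by
  unfold pNrm
  rw [sum_subtype_ne i₀ (fun i => |a i|), sum_subtype_ne i₀ a, sum_abs_eq_helper a]
  have h1 : |∑ i, a i - a i₀| ≤ |∑ i, a i| + |a i₀| := abs_sub _ _
  have h2 : |∑ i, a i| = ∑ i, a i := abs_of_nonneg hs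
  linarith

lemma pNrm_subtype_eq (i₀ : ι) (a : ι → ℝ) (hs : ∑ i, a i = 0) :
    pNrm (fun i : {j // j ≠ i₀} => a i.1) = ∑ i, max 0 (a i) := by
  unfold pNrm
  rw [sum_subtype_ne i₀ (fun i => |a i|), sum_subtype_ne i₀ a, sum_abs_eq_helper a, hs]
  rw [zero_sub, abs_neg]
  ring

lemma pNrm_nonneg (y : ι → ℝ) : 0 ≤ pNrm y := by
  unfold pNrm
  have h1 : (0:ℝ) ≤ ∑ i, |y i| := Finset.sum_nonneg fun i _ => abs_nonneg _
  have h2 : (0:ℝ) ≤ |∑ i, y i| := abs_nonneg _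
  linarith

lemma pNrm_neg (y : ι → ℝ) : pNrm (-y) = pNrm y := by
  unfold pNrm
  rw [show ∑ i, (-y) i = -∑ i, y i by simp]
  simp [abs_neg]

lemma pNrm_add_le (y z : ι → ℝ) : pNrm (y + z) ≤ pNrm y + pNrm z := by
  unfold pNrm
  have h1 : ∑ i, |(y + z) i| ≤ (∑ i, |y i|) + ∑ i, |z i| := by
    rw [← Finset.sum_add_distrib]
    exact Finset.sum_le_sum fun i _ => abs_add_le _ _
  have h2 : |∑ i, (y + z) i| ≤ |∑ i, y i| + |∑ i, z i| := by
    simp_rw [Pi.add_apply, Finset.sum_add_distrib]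
    exact abs_add_le _ _
  simp only [Pi.add_apply] at h1 h2 ⊢
  linarith

lemma pNrm_smul (c : ℝ) (y : ι → ℝ) : pNrm (c • y) = |c| * pNrm y := by
  unfold pNrm
  have h1 : ∑ i, |(c • y) i| = |c| * ∑ i, |y i| := by
    simp_rw [Pi.smul_apply, smul_eq_mul, abs_mul, Finset.mul_sum]
  have h2 : |∑ i, (c • y) i| = |c| * |∑ i, y i| := by
    simp_rw [Pi.smul_apply, smul_eq_mul, ← Finset.mul_sum, abs_mul]
  rw [h1, h2]
  ring

lemma pNrm_continuous : Continuous (pNrm (ι := ι)) := by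
  unfold pNrm
  apply Continuous.div_const
  apply Continuous.add
  · exact continuous_finset_sum _ fun i _ => (continuous_apply i).abs
  · exact (continuous_finset_sum _ fun i _ => (continuous_apply i)).abs

lemma pNrm_le_sum (y : ι → ℝ) : pNrm y ≤ ∑ i, |y i| := by
  unfold pNrm
  have := Finset.abs_sum_le_sum_abs y Finset.univ
  linarith

lemma abs_le_two_pNrm (y : ι → ℝ) (i : ι) : |y i| ≤ 2 * pNrm y := by
  have h : |y i| ≤ ∑ j, |y j| :=
    Finset.single_le_sum (f := fun j => |y j|) (fun j _ => abs_nonneg _) (Finset.mem_univ i)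
  unfold pNrm
  have h2 : (0:ℝ) ≤ |∑ j, y j| := abs_nonneg _
  linarith

lemma pNrm_ball_meas (ρ : ℝ) : MeasurableSet {x : ι → ℝ | pNrm x ≤ ρ} :=
  measurableSet_le pNrm_continuous.measurable measurable_const

lemma pNrm_ball_scale {ρ : ℝ} (hρ : 0 < ρ) :
    {x : ι → ℝ | pNrm x ≤ ρ} = ρ • {x : ι → ℝ | pNrm x ≤ 1} := by
  ext x
  rw [Set.mem_smul_set_iff_inv_smul_mem₀ hρ.ne']
  simp only [Set.mem_setOf_eq, pNrm_smul, abs_inv, abs_of_pos hρ]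
  rw [inv_mul_le_one₀ hρ]

lemma pNrm_ball_vol (ρ : ℝ) (hρ : 0 < ρ) :
    volume {x : ι → ℝ | pNrm x ≤ ρ} =
      ENNReal.ofReal (ρ ^ Fintype.card ι) * volume {x : ι → ℝ | pNrm x ≤ 1} := by
  rw [pNrm_ball_scale hρ, Measure.addHaar_smul_of_nonneg volume hρ.le,
    Module.finrank_fintype_fun_eq_card]

lemma pNrm_ball_pos : 0 < volume {x : ι → ℝ | pNrm x ≤ 1} := by
  have hsub : Metric.ball (0 : ι → ℝ) ((Fintype.card ι + 1 : ℝ)⁻¹) ⊆ {x : ι → ℝ | pNrm x ≤ 1} := by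
    intro x hx
    simp only [Metric.mem_ball, dist_zero_right] at hx
    have h1 : pNrm x ≤ ∑ i, |x i| := pNrm_le_sum x
    have h2 : ∑ i, |x i| ≤ (Fintype.card ι : ℝ) * ‖x‖ := by
      calc ∑ i, |x i| ≤ ∑ _i : ι, ‖x‖ :=
            Finset.sum_le_sum fun i _ => by
              simpa using norm_le_pi_norm x i
        _ = (Fintype.card ι : ℝ) * ‖x‖ := by
            simp [Finset.sum_const, mul_comm]
    have h3 : (0:ℝ) < (Fintype.card ι + 1 : ℝ) := by positivity
    have h4 : (Fintype.card ι : ℝ) * ‖x‖ ≤ 1 := by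
      have hn : (0:ℝ) ≤ (Fintype.card ι : ℝ) := Nat.cast_nonneg _
      have h5 := mul_le_mul_of_nonneg_left hx.le hn
      have h6 : (Fintype.card ι : ℝ) * (Fintype.card ι + 1 : ℝ)⁻¹ ≤ 1 := by
        rw [← div_eq_mul_inv, div_le_one h3]
        linarith
      linarith
    exact Set.mem_setOf_eq ▸ by linarith
  refine lt_of_lt_of_le (Metric.measure_ball_pos volume 0 (by positivity)) (measure_mono hsub)

lemma pNrm_ball_fin : volume {x : ι → ℝ | pNrm x ≤ 1} < ⊤ := by
  have hsub : {x : ι → ℝ | pNrm x ≤ 1} ⊆ Metric.closedBall (0 : ι → ℝ) 2 := by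
    intro x hx
    simp only [Set.mem_setOf_eq] at hx
    rw [Metric.mem_closedBall, dist_zero_right]
    refine pi_norm_le_iff_of_nonneg (by norm_num) |>.2 fun i => ?_
    calc ‖x i‖ = |x i| := rfl
      _ ≤ 2 * pNrm x := abs_le_two_pNrm x i
      _ ≤ 2 := by linarith
  exact lt_of_le_of_lt (measure_mono hsub) (measure_closedBall_lt_top)

lemma packing_count {κ : Type*} (F : Finset κ) (q : κ → ι → ℝ)
    (r R : ℝ) (hr : 0 < r) (hR : 0 ≤ R)
    (hq : ∀ k ∈ F, pNrm (q k) ≤ R)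
    (hsep : ∀ k ∈ F, ∀ l ∈ F, k ≠ l → 2 * r < pNrm (q k - q l)) :
    (F.card : ℝ) ≤ ((R + r) / r) ^ (Fintype.card ι) := by
  classical
  set m := Fintype.card ι
  set c := volume {x : ι → ℝ | pNrm x ≤ 1} with hc
  set Ball : κ → Set (ι → ℝ) := fun k => {x | pNrm (x - q k) ≤ r} with hBall
  have hBallEq : ∀ k, Ball k = (fun x => -q k + x) ⁻¹' {x : ι → ℝ | pNrm x ≤ r} := by
    intro k; ext x
    simp only [hBall, Set.mem_setOf_eq, Set.mem_preimage]
    rw [show -q k + x = x - q k by ring]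
  have hBallMeas : ∀ k, MeasurableSet (Ball k) := by
    intro k
    rw [hBallEq]
    exact (measurable_const_add _) (pNrm_ball_meas r)
  have hBallVol : ∀ k, volume (Ball k) = ENNReal.ofReal (r ^ m) * c := by
    intro k
    rw [hBallEq, measure_preimage_add, pNrm_ball_vol r hr]
  have hdisj : (↑F : Set κ).PairwiseDisjoint Ball := by
    intro k hk l hl hkl
    refine Set.disjoint_left.2 fun x hxk hxl => ?_
    have h1 : pNrm (x - q k) ≤ r := hxk
    have h2 : pNrm (x - q l) ≤ r := hxl
    have h3 : pNrm (q k - q l) ≤ 2 * r := by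
      have := pNrm_add_le (q k - x) (x - q l)
      rw [show q k - x + (x - q l) = q k - q l by ring] at this
      have h4 : pNrm (q k - x) = pNrm (x - q k) := by
        rw [← pNrm_neg (q k - x), show -(q k - x) = x - q k by ring]
      linarith
    exact absurd h3 (not_le.2 (hsep k hk l hl hkl))
  have hsub : (⋃ k ∈ F, Ball k) ⊆ {x : ι → ℝ | pNrm x ≤ R + r} := by
    intro x hx
    simp only [Set.mem_iUnion] at hx
    obtain ⟨k, hk, hxk⟩ := hx
    have h1 : pNrm (x - q k) ≤ r := hxk
    have h2 : pNrm x ≤ pNrm (x - q k) + pNrm (q k) := by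
      have := pNrm_add_le (x - q k) (q k)
      rwa [show x - q k + q k = x by ring] at this
    have := hq k hk
    simp only [Set.mem_setOf_eq]
    linarith
  have hsum : ∑ k ∈ F, volume (Ball k) ≤ volume {x : ι → ℝ | pNrm x ≤ R + r} := by
    rw [← measure_biUnion_finset hdisj fun k _ => hBallMeas k]
    exact measure_mono hsub
  rw [Finset.sum_congr rfl fun k _ => hBallVol k, Finset.sum_const, nsmul_eq_mul,
    pNrm_ball_vol (R + r) (by linarith)] at hsum
  have hc0 : c ≠ 0 := pNrm_ball_pos.ne'
  have hctop : c ≠ ⊤ := pNrm_ball_fin.ne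
  rw [← mul_assoc] at hsum
  have hsum2 : (F.card : ℝ≥0∞) * ENNReal.ofReal (r ^ m) ≤ ENNReal.ofReal ((R + r) ^ m) :=
    (ENNReal.mul_le_mul_iff_left hc0 hctop).1 hsum
  have hsum3 : ENNReal.ofReal ((F.card : ℝ) * r ^ m) ≤ ENNReal.ofReal ((R + r) ^ m) := by
    rwa [ENNReal.ofReal_mul (by positivity), ENNReal.ofReal_natCast]
  have hsum4 : (F.card : ℝ) * r ^ m ≤ (R + r) ^ m :=
    (ENNReal.ofReal_le_ofReal_iff (by positivity)).1 hsum3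
  rw [div_pow, le_div_iff₀ (by positivity)]
  exact hsum4

end PNrm

section NFLemmas
open scoped Pointwise

variable {K : Type*} [Field K] [NumberField K]

lemma sum_max_embeddings (α : K) :
    ∑ σ : K →+* ℂ, max 0 (Real.log ‖σ α‖) =
      ∑ w : InfinitePlace K, max 0 (logEmb α w) := by
  rw [← Finset.univ.sum_fiberwise (fun φ : K →+* ℂ => InfinitePlace.mk φ)
    (fun φ => max 0 (Real.log ‖φ α‖))]
  refine Finset.sum_congr rfl fun w _ => ?_
  have h : ∀ φ ∈ Finset.univ.filter (fun φ : K →+* ℂ => InfinitePlace.mk φ = w),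
      max 0 (Real.log ‖φ α‖) = max 0 (Real.log (w α)) := by
    intro φ hφ
    rw [Finset.mem_filter] at hφ
    rw [← hφ.2, InfinitePlace.apply]
  rw [Finset.sum_congr rfl h, Finset.sum_const, InfinitePlace.card_filter_mk_eq,
    nsmul_eq_mul, logEmb]
  rw [mul_max_of_nonneg _ _ (by positivity : (0:ℝ) ≤ (InfinitePlace.mult w : ℝ)), mul_zero]

lemma hInf_eq_sum_places (α : K) :
    (Module.finrank ℚ K : ℝ) * hInf K α = ∑ w : InfinitePlace K, max 0 (logEmb α w) := by
  rw [hInf, ← mul_assoc, mul_inv_cancel₀ (by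
    exact_mod_cast Module.finrank_pos.ne' : (Module.finrank ℚ K : ℝ) ≠ 0), one_mul,
    sum_max_embeddings]

lemma sum_logEmb_unit (u : (𝓞 K)ˣ) :
    ∑ w : InfinitePlace K, logEmb (algebraMap (𝓞 K) K u) w = 0 := by
  have h := congr_arg Real.log (InfinitePlace.prod_eq_abs_norm (algebraMap (𝓞 K) K u))
  have hnorm : |(Algebra.norm ℚ) ((algebraMap (𝓞 K) K) u)| = 1 := NumberField.Units.norm K u
  rw [hnorm, Rat.cast_one, Real.log_one, Real.log_prod] at h
  · simp_rw [Real.log_pow] at h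
    simpa [logEmb] using h
  · intro w _
    exact pow_ne_zero _ ((InfinitePlace.pos_iff.2 (NumberField.Units.coe_ne_zero u)).ne')

lemma logEmb_mul {x y : K} (hx : x ≠ 0) (hy : y ≠ 0) :
    logEmb (x * y) = logEmb x + logEmb y := by
  funext w
  simp only [logEmb, Pi.add_apply, map_mul]
  rw [Real.log_mul ((InfinitePlace.pos_iff.2 hx).ne') ((InfinitePlace.pos_iff.2 hy).ne')]
  ring

end NFLemmas

set_option maxHeartbeats 1000000 in
theorem statement2 (K : Type*) [Field K] [NumberField K]
    (S : Finset ((𝓞 K)ˣ)) (hSinv : ∀ u ∈ S, u⁻¹ ∈ S)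
    (cS : ℝ) (hcS0 : 0 < cS)
    (hcS : ∀ β : (𝓞 K)ˣ, β ∉ S → cS < hInf K (algebraMap (𝓞 K) K β))
    (η : InfinitePlace K → ℝ) (hη : 0 ≤ ∑ w, η w) (X : ℝ) (hX : 0 ≤ X) :
    {β : (𝓞 K)ˣ | hTil K (η + logEmb (algebraMap (𝓞 K) K β)) ≤ X}.Finite ∧
    (Nat.card {β : (𝓞 K)ˣ | hTil K (η + logEmb (algebraMap (𝓞 K) K β)) ≤ X} : ℝ) ≤
      (S.card : ℝ) * ((X + cS / 2) / (cS / 2)) ^ (Fintype.card (InfinitePlace K) - 1) := by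
  classical
  have hd0 : (0:ℝ) < (Module.finrank ℚ K : ℝ) := by exact_mod_cast Module.finrank_pos
  set d : ℝ := (Module.finrank ℚ K : ℝ) with hdd
  obtain ⟨w₀⟩ : Nonempty (InfinitePlace K) := inferInstance
  set A := {β : (𝓞 K)ˣ | hTil K (η + logEmb (algebraMap (𝓞 K) K β)) ≤ X} with hA
  have h1S : (1 : (𝓞 K)ˣ) ∈ S := by
    by_contra hmem
    have h := hcS 1 hmem
    have h0 : hInf K (algebraMap (𝓞 K) K (1 : (𝓞 K)ˣ)) = 0 := by
      simp [hInf]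
    rw [h0] at h
    linarith
  set q : (𝓞 K)ˣ → {w : InfinitePlace K // w ≠ w₀} → ℝ :=
    fun β w => η w.1 + logEmb (algebraMap (𝓞 K) K β) w.1 with hqdef
  -- Bound on each point
  have hbound : ∀ β ∈ A, pNrm (q β) ≤ d * X := by
    intro β hβ
    have hβ' : hTil K (η + logEmb (algebraMap (𝓞 K) K β)) ≤ X := hβ
    rw [hTil] at hβ'
    have hmax : ∑ w, max 0 (η w + logEmb (algebraMap (𝓞 K) K β) w) ≤ d * X := by
      simp only [Pi.add_apply] at hβ'
      have h2 := mul_le_mul_of_nonneg_left hβ' hd0.le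
      rwa [← mul_assoc, mul_inv_cancel₀ hd0.ne', one_mul] at h2
    have hssum : 0 ≤ ∑ w, (η w + logEmb (algebraMap (𝓞 K) K β) w) := by
      rw [Finset.sum_add_distrib, sum_logEmb_unit β, add_zero]
      exact hη
    have hb := pNrm_subtype_bound w₀ (fun w => η w + logEmb (algebraMap (𝓞 K) K β) w) hssum
    have hqb : q β = fun i : {j : InfinitePlace K // j ≠ w₀} =>
        (fun w => η w + logEmb (algebraMap (𝓞 K) K β) w) i.1 := rfl
    rw [hqb]
    exact le_trans hb hmax
  -- Separation
  have hsep : ∀ β β' : (𝓞 K)ˣ, β * β'⁻¹ ∉ S →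
      2 * (d * cS / 2) < pNrm (q β - q β') := by
    intro β β' hu
    set u : (𝓞 K)ˣ := β * β'⁻¹ with hudef
    have hfact : (algebraMap (𝓞 K) K) (β : 𝓞 K) =
        (algebraMap (𝓞 K) K) (u : 𝓞 K) * (algebraMap (𝓞 K) K) (β' : 𝓞 K) := by
      rw [← map_mul, ← Units.val_mul, hudef, inv_mul_cancel_right]
    have hlogsplit : logEmb ((algebraMap (𝓞 K) K) (β : 𝓞 K)) =
        logEmb ((algebraMap (𝓞 K) K) (u : 𝓞 K)) + logEmb ((algebraMap (𝓞 K) K) (β' : 𝓞 K)) := by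
      rw [hfact, logEmb_mul (NumberField.Units.coe_ne_zero u) (NumberField.Units.coe_ne_zero β')]
    have hdiff : q β - q β' = fun w : {w : InfinitePlace K // w ≠ w₀} =>
        logEmb ((algebraMap (𝓞 K) K) (u : 𝓞 K)) w.1 := by
      funext w
      simp only [hqdef, Pi.sub_apply, hlogsplit, Pi.add_apply]
      ring
    have hsum0 : ∑ w, logEmb ((algebraMap (𝓞 K) K) (u : 𝓞 K)) w = 0 := sum_logEmb_unit u
    have heq : pNrm (q β - q β') = ∑ w, max 0 (logEmb ((algebraMap (𝓞 K) K) (u : 𝓞 K)) w) := by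
      rw [hdiff]
      exact pNrm_subtype_eq w₀ (fun w => logEmb ((algebraMap (𝓞 K) K) (u : 𝓞 K)) w) hsum0
    have hgt : d * cS < ∑ w, max 0 (logEmb ((algebraMap (𝓞 K) K) (u : 𝓞 K)) w) := by
      rw [← hInf_eq_sum_places]
      have := hcS u hu
      calc d * cS < d * hInf K ((algebraMap (𝓞 K) K) (u : 𝓞 K)) := by
            exact (mul_lt_mul_iff_right₀ hd0).2 this
        _ = _ := rfl
    rw [heq]
    linarith
  -- Ratio computation
  set r : ℝ := d * cS / 2 with hrdef
  set R : ℝ := d * X with hRdef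
  have hr : 0 < r := by rw [hrdef]; positivity
  have hR : 0 ≤ R := by rw [hRdef]; positivity
  have hm : Fintype.card {w : InfinitePlace K // w ≠ w₀} =
      Fintype.card (InfinitePlace K) - 1 := by
    rw [Fintype.card_subtype_compl (fun w => w = w₀), Fintype.card_subtype_eq]
  have hratio : (R + r) / r = (X + cS / 2) / (cS / 2) := by
    rw [hRdef, hrdef, show d * X + d * cS / 2 = d * (X + cS / 2) by ring,
      show d * cS / 2 = d * (cS / 2) by ring, mul_div_mul_left _ _ hd0.ne']
  set M : ℝ := ((X + cS / 2) / (cS / 2)) ^ (Fintype.card (InfinitePlace K) - 1) with hMdef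
  have key : ∀ F : Finset ((𝓞 K)ˣ), (↑F ⊆ A) →
      (∀ β ∈ F, ∀ β' ∈ F, β ≠ β' → β * β'⁻¹ ∉ S) → (F.card : ℝ) ≤ M := by
    intro F hFA hFsep
    have h := packing_count F q r R hr hR
      (fun k hk => hbound k (hFA hk))
      (fun k hk l hl hkl => hsep k l (hFsep k hk l hl hkl))
    rwa [hratio, hm] at h
  have hM0 : 0 ≤ M := by
    have hb : (0:ℝ) ≤ (X + cS / 2) / (cS / 2) := by positivity
    exact pow_nonneg hb _
  -- Maximal separated finset
  set P : Finset ((𝓞 K)ˣ) → Prop :=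
    fun F => (↑F ⊆ A) ∧ (∀ β ∈ F, ∀ β' ∈ F, β ≠ β' → β * β'⁻¹ ∉ S) with hPdef
  set cset : Set ℕ := {n | ∃ F, P F ∧ F.card = n} with hcsetdef
  have hcne : cset.Nonempty := ⟨0, ∅, ⟨by simp, by simp⟩, rfl⟩
  have hbdd : BddAbove cset := by
    refine ⟨⌊M⌋₊, fun n hn => ?_⟩
    obtain ⟨F, hF, hFc⟩ := hn
    rw [← hFc]
    exact Nat.le_floor (key F hF.1 hF.2)
  obtain ⟨T, hTP, hTc⟩ : ∃ F, P F ∧ F.card = sSup cset := Nat.sSup_mem hcne hbdd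
  -- Covering
  have hcover : ∀ β ∈ A, ∃ t ∈ T, ∃ v ∈ S, β = v * t := by
    intro β hβ
    by_cases hβT : ∃ t ∈ T, β * t⁻¹ ∈ S
    · obtain ⟨t, ht, hv⟩ := hβT
      exact ⟨t, ht, β * t⁻¹, hv, by rw [inv_mul_cancel_right]⟩
    · exfalso
      push_neg at hβT
      have hβnotT : β ∉ T := by
        intro h
        exact hβT β h (by rw [mul_inv_cancel]; exact h1S)
      have hins : P (insert β T) := by
        constructor
        · intro x hx
          rcases Finset.mem_insert.1 (Finset.mem_coe.1 hx) with rfl | hx'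
          · exact hβ
          · exact hTP.1 (Finset.mem_coe.2 hx')
        · intro x hx y hy hxy
          rcases Finset.mem_insert.1 hx with rfl | hx' <;>
            rcases Finset.mem_insert.1 hy with rfl | hy'
          · exact absurd rfl hxy
          · exact hβT y hy'
          · intro hmem
            have h2 := hSinv _ hmem
            rw [mul_inv_rev, inv_inv] at h2
            exact hβT x hx' h2
          · exact hTP.2 x hx' y hy' hxy
      have hmem : T.card + 1 ∈ cset :=
        ⟨insert β T, hins, by rw [Finset.card_insert_of_notMem hβnotT]⟩
      have hle := le_csSup hbdd hmem
      rw [← hTc] at hle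
      omega
  -- Conclusion
  set B : Finset ((𝓞 K)ˣ) :=
    Finset.image (fun p : ((𝓞 K)ˣ) × ((𝓞 K)ˣ) => p.1 * p.2) (S ×ˢ T) with hBdef
  have hAB : A ⊆ ↑B := by
    intro β hβ
    obtain ⟨t, ht, v, hv, rfl⟩ := hcover β hβ
    exact Finset.mem_coe.2 (Finset.mem_image.2 ⟨(v, t), Finset.mem_product.2 ⟨hv, ht⟩, rfl⟩)
  have hfin : A.Finite := Set.Finite.subset B.finite_toSet hAB
  refine ⟨hfin, ?_⟩
  have hcard1 : Nat.card A ≤ B.card := by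
    rw [Nat.card_coe_set_eq]
    have h := Set.ncard_le_ncard hAB B.finite_toSet
    rwa [Set.ncard_coe_finset] at h
  have hcard2 : (B.card : ℝ) ≤ (S.card : ℝ) * (T.card : ℝ) := by
    have h := Finset.card_image_le
      (f := fun p : ((𝓞 K)ˣ) × ((𝓞 K)ˣ) => p.1 * p.2) (s := S ×ˢ T)
    rw [Finset.card_product] at h
    exact_mod_cast h
  have hT : (T.card : ℝ) ≤ M := key T hTP.1 hTP.2
  calc (Nat.card A : ℝ) ≤ (B.card : ℝ) := by exact_mod_cast hcard1
    _ ≤ (S.card : ℝ) * (T.card : ℝ) := hcard2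
    _ ≤ (S.card : ℝ) * M := mul_le_mul_of_nonneg_left hT (Nat.cast_nonneg _)
end

section
/- Let S_K ⊆ O_K^× be a finite set closed under inversion and let c_S > 0 be a constant with c_S < h_∞(β) for every β ∈ O_K^× ∖ S_K. Let H = {x ∈ ℝ^{r₁+r₂} : Σ_j x_j = 0} and P = {ξ ∈ H : h̃(ξ) ≤ c_S/2}. Then for every η ∈ ℝ^{r₁+r₂} and all β₁, β₂ ∈ O_K^×: if the translates L(β₁) + η + P and L(β₂) + η + P have a common point, then β₁β₂⁻¹ ∈ S_K. -/
open NumberField MeasureTheory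
open scoped ENNReal Classical nonZeroDivisors

lemma hInf_eq_hTil (K : Type*) [Field K] [NumberField K] (α : K) :
    hInf K α = hTil K (logEmb α) := by
  unfold hInf hTil logEmb
  congr 1
  rw [← Finset.sum_fiberwise Finset.univ (fun φ => InfinitePlace.mk φ)
    (fun φ => max 0 (Real.log ‖φ α‖))]
  refine Finset.sum_congr rfl fun w _ => ?_
  have key : ∀ φ ∈ Finset.filter (fun φ => InfinitePlace.mk φ = w) Finset.univ,
      max 0 (Real.log ‖φ α‖) = max 0 (Real.log (w α)) := fun φ hφ => by
    rw [← (Finset.mem_filter.mp hφ).2, InfinitePlace.apply]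
  rw [Finset.sum_congr rfl key, Finset.sum_const, InfinitePlace.card_filter_mk_eq,
    nsmul_eq_mul, mul_max_of_nonneg _ _ (by positivity : (0:ℝ) ≤ (w.mult:ℝ)), mul_zero]

-- homomorphism
lemma logEmb_mul_s3 {K : Type*} [Field K] [NumberField K] {α β : K} (hα : α ≠ 0) (hβ : β ≠ 0) :
    logEmb (α * β) = logEmb α + logEmb β := by
  funext w
  simp only [logEmb, Pi.add_apply, map_mul]
  rw [Real.log_mul (by simpa using hα) (by simpa using hβ)]
  ring

lemma hTil_add_le (K : Type*) [Field K] [NumberField K] (x y : InfinitePlace K → ℝ) :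
    hTil K (x + y) ≤ hTil K x + hTil K y := by
  unfold hTil
  rw [← mul_add, ← Finset.sum_add_distrib]
  refine mul_le_mul_of_nonneg_left (Finset.sum_le_sum fun w _ => ?_) (by positivity)
  exact max_le (by positivity) (add_le_add (le_max_right 0 (x w)) (le_max_right 0 (y w)))

lemma hTil_neg (K : Type*) [Field K] [NumberField K] (x : InfinitePlace K → ℝ)
    (hx : ∑ w, x w = 0) : hTil K (-x) = hTil K x := by
  unfold hTil
  congr 1
  have : ∀ a : ℝ, max 0 (-a) = max 0 a - a := fun a => by
    rcases le_total a 0 with h | h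
    · rw [max_eq_right (neg_nonneg.mpr h), max_eq_left h]; ring
    · rw [max_eq_left (neg_nonpos.mpr h), max_eq_right h]; ring
  simp only [Pi.neg_apply, this, Finset.sum_sub_distrib, hx, sub_zero]

theorem statement3 (K : Type*) [Field K] [NumberField K]
    (S : Finset ((𝓞 K)ˣ)) (hSinv : ∀ u ∈ S, u⁻¹ ∈ S)
    (cS : ℝ) (hcS0 : 0 < cS)
    (hcS : ∀ β : (𝓞 K)ˣ, β ∉ S → cS < hInf K (algebraMap (𝓞 K) K β))
    (H : Set (InfinitePlace K → ℝ)) (hH : H = {x | ∑ w, x w = 0})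
    (P : Set (InfinitePlace K → ℝ)) (hP : P = {ξ ∈ H | hTil K ξ ≤ cS / 2})
    (η : InfinitePlace K → ℝ) (β₁ β₂ : (𝓞 K)ˣ)
    (hmeet : (((fun ξ => logEmb (algebraMap (𝓞 K) K β₁) + η + ξ) '' P) ∩
      ((fun ξ => logEmb (algebraMap (𝓞 K) K β₂) + η + ξ) '' P)).Nonempty) :
    β₁ * β₂⁻¹ ∈ S := by
  obtain ⟨x, ⟨ξ₁, hξ₁, e₁⟩, ⟨ξ₂, hξ₂, e₂⟩⟩ := hmeet
  subst hP hH
  obtain ⟨⟨hξ₁H, hξ₁h⟩, ⟨hξ₂H, hξ₂h⟩⟩ := And.intro hξ₁ hξ₂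
  set γ : (𝓞 K)ˣ := β₁ * β₂⁻¹ with hγ
  have hne : ∀ β : (𝓞 K)ˣ, (algebraMap (𝓞 K) K β) ≠ 0 := fun β =>
    (β.isUnit.map (algebraMap (𝓞 K) K)).ne_zero
  have hmul : (algebraMap (𝓞 K) K γ) * (algebraMap (𝓞 K) K β₂) = algebraMap (𝓞 K) K β₁ := by
    rw [← map_mul]
    congr 1
    rw [hγ, ← Units.val_mul, mul_assoc]
    simp
  have hlog : logEmb (algebraMap (𝓞 K) K γ) = ξ₂ + (-ξ₁) := by
    have h1 : logEmb (algebraMap (𝓞 K) K γ) + logEmb (algebraMap (𝓞 K) K β₂)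
        = logEmb (algebraMap (𝓞 K) K β₁) := by
      rw [← logEmb_mul_s3 (hne γ) (hne β₂), hmul]
    have h2 : logEmb (algebraMap (𝓞 K) K β₁) + η + ξ₁
        = logEmb (algebraMap (𝓞 K) K β₂) + η + ξ₂ := e₁.trans e₂.symm
    funext w
    have h1w := congrFun h1 w
    have h2w := congrFun h2 w
    simp only [Pi.add_apply, Pi.neg_apply] at h1w h2w ⊢
    linarith
  by_contra hγS
  have hbig := hcS γ hγS
  have hsmall : hInf K (algebraMap (𝓞 K) K γ) ≤ cS := by
    rw [hInf_eq_hTil, hlog]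
    calc hTil K (ξ₂ + (-ξ₁)) ≤ hTil K ξ₂ + hTil K (-ξ₁) := hTil_add_le K _ _
      _ = hTil K ξ₂ + hTil K ξ₁ := by rw [hTil_neg K ξ₁ hξ₁H]
      _ ≤ cS / 2 + cS / 2 := add_le_add hξ₂h hξ₁h
      _ = cS := by ring
  linarith
end

section
/- Let (Ω, 𝒜, P) be a probability space, let ω be a positive integer, let Err ≥ 0 and 0 < ε < 1 be real numbers. Let ρ₁, ρ₂ : Ω → ℕ be random variables such that ω divides ρᵢ(x) for every x ∈ Ω and i = 1, 2, with ρ₁ integrable, ρ₂ square-integrable, E[ρ₁] = ω·ε, E[ρ₂] = ω/ε, and E[ρ₂²] ≤ (ω/ε)² + ω·(ω/ε)·(1 + Err). Then P({ρ₁ = 0} ∩ {ρ₂ ≥ 1}) ≥ 1 − ε·(2 + ω·Err). -/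
open MeasureTheory
open scoped ENNReal

theorem statement12 (Ω : Type*) [MeasureSpace Ω]
    [IsProbabilityMeasure (volume : Measure Ω)]
    (ω : ℕ) (hω : 0 < ω) (Err ε : ℝ) (hErr : 0 ≤ Err) (hε0 : 0 < ε) (hε1 : ε < 1)
    (ρ₁ ρ₂ : Ω → ℕ) (hmeas₁ : Measurable ρ₁) (hmeas₂ : Measurable ρ₂)
    (hdvd₁ : ∀ x, ω ∣ ρ₁ x) (hdvd₂ : ∀ x, ω ∣ ρ₂ x)
    (hint₁ : Integrable (fun x => (ρ₁ x : ℝ)))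
    (hint₂ : MemLp (fun x => (ρ₂ x : ℝ)) 2)
    (hE₁ : ∫ x, (ρ₁ x : ℝ) = ω * ε)
    (hE₂ : ∫ x, (ρ₂ x : ℝ) = ω / ε)
    (hE₂sq : ∫ x, ((ρ₂ x : ℝ)) ^ 2 ≤ ((ω : ℝ) / ε) ^ 2 + ω * ((ω : ℝ) / ε) * (1 + Err)) :
    ENNReal.ofReal (1 - ε * (2 + ω * Err)) ≤ volume {x | ρ₁ x = 0 ∧ 1 ≤ ρ₂ x} := by
  set m : ℝ := (ω : ℝ) / ε with hm
  have hωR : (0:ℝ) < ω := Nat.cast_pos.mpr hω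
  have hm0 : 0 < m := div_pos hωR hε0
  -- set A and B
  set A : Set Ω := {x | 1 ≤ ρ₁ x} with hA
  set B : Set Ω := {x | ρ₂ x = 0} with hB
  -- Markov for ρ₁
  have markov := mul_meas_ge_le_integral_of_nonneg
    (μ := (volume : Measure Ω)) (f := fun x => (ρ₁ x : ℝ))
    (ae_of_all _ fun x => Nat.cast_nonneg _) hint₁ (ω : ℝ)
  rw [hE₁] at markov
  have hAsub : A = {x | (ω : ℝ) ≤ (ρ₁ x : ℝ)} := by
    ext x
    simp only [hA, Set.mem_setOf_eq, Nat.cast_le (α := ℝ)]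
    constructor
    · intro h
      exact Nat.le_of_dvd (by omega) (hdvd₁ x)
    · intro h; omega
  have hAtop : volume A ≠ ⊤ := measure_ne_top _ _
  have hAle : (volume A).toReal ≤ ε := by
    have : (ω : ℝ) * (volume A).toReal ≤ (ω : ℝ) * ε := by
      rw [hAsub]; exact markov
    exact le_of_mul_le_mul_left this hωR
  -- second moment bound for B
  have hρ₂int : Integrable (fun x => (ρ₂ x : ℝ)) := hint₂.integrable one_le_two
  have hsqint : Integrable (fun x => ((ρ₂ x : ℝ)) ^ 2) := hint₂.integrable_sq
  have hgint : Integrable (fun x => ((ρ₂ x : ℝ) - m) ^ 2) := by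
    have h : (fun x => ((ρ₂ x : ℝ) - m) ^ 2)
        = fun x => ((ρ₂ x : ℝ)) ^ 2 - (2 * m) * (ρ₂ x : ℝ) + m ^ 2 := by
      funext x; ring
    rw [h]
    exact (hsqint.sub (hρ₂int.const_mul _)).add (integrable_const _)
  have hgval : ∫ x, ((ρ₂ x : ℝ) - m) ^ 2 = (∫ x, ((ρ₂ x : ℝ)) ^ 2) - m ^ 2 := by
    have h : (fun x => ((ρ₂ x : ℝ) - m) ^ 2)
        = fun x => ((ρ₂ x : ℝ)) ^ 2 - (2 * m) * (ρ₂ x : ℝ) + m ^ 2 := by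
      funext x; ring
    have h1 := integral_add (μ := (volume : Measure Ω))
      (f := fun x => ((ρ₂ x : ℝ)) ^ 2 - (2 * m) * (ρ₂ x : ℝ)) (g := fun _ => m ^ 2)
      (hsqint.sub (hρ₂int.const_mul _)) (integrable_const _)
    have h2 := integral_sub (μ := (volume : Measure Ω))
      (f := fun x => ((ρ₂ x : ℝ)) ^ 2) (g := fun x => (2 * m) * (ρ₂ x : ℝ))
      hsqint (hρ₂int.const_mul _)
    rw [h, h1, h2, integral_const_mul, hE₂, integral_const]
    simp only [measure_univ, probReal_univ, ENNReal.toReal_one, smul_eq_mul, one_mul]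
    ring
  have markov₂ := mul_meas_ge_le_integral_of_nonneg
    (μ := (volume : Measure Ω)) (f := fun x => ((ρ₂ x : ℝ) - m) ^ 2)
    (ae_of_all _ fun x => sq_nonneg _) hgint (m ^ 2)
  have hBsub : B ⊆ {x | m ^ 2 ≤ ((ρ₂ x : ℝ) - m) ^ 2} := by
    intro x hx
    simp only [hB, Set.mem_setOf_eq] at hx ⊢
    rw [hx]; simp
  have hBle : (volume B).toReal ≤ ε * (1 + Err) := by
    have h1 : m ^ 2 * (volume B).toReal ≤ m ^ 2 * (volume {x | m ^ 2 ≤ ((ρ₂ x : ℝ) - m) ^ 2}).toReal := by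
      apply mul_le_mul_of_nonneg_left _ (sq_nonneg m)
      exact ENNReal.toReal_mono (measure_ne_top _ _) (measure_mono hBsub)
    have h2 : m ^ 2 * (volume B).toReal ≤ (ω : ℝ) * m * (1 + Err) := by
      calc m ^ 2 * (volume B).toReal ≤ ∫ x, ((ρ₂ x : ℝ) - m) ^ 2 := h1.trans markov₂
        _ = (∫ x, ((ρ₂ x : ℝ)) ^ 2) - m ^ 2 := hgval
        _ ≤ (ω : ℝ) * m * (1 + Err) := by rw [hm]; linarith [hE₂sq]
    have hmω : (ω : ℝ) / m = ε := by
      rw [hm]; field_simp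
    have hωm : (ω : ℝ) * m = ε * m ^ 2 := by
      rw [hm]; field_simp
    refine le_of_mul_le_mul_left ?_ (by positivity : (0:ℝ) < m ^ 2)
    calc m ^ 2 * (volume B).toReal ≤ (ω : ℝ) * m * (1 + Err) := h2
      _ = m ^ 2 * (ε * (1 + Err)) := by rw [hωm]; ring
  -- combine
  have hcompl : {x | ρ₁ x = 0 ∧ 1 ≤ ρ₂ x} = (A ∪ B)ᶜ := by
    ext x
    simp only [hA, hB, Set.mem_compl_iff, Set.mem_union, Set.mem_setOf_eq]
    omega
  have hABmeas : MeasurableSet (A ∪ B) := by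
    apply MeasurableSet.union
    · exact hmeas₁ measurableSet_Ici
    · exact hmeas₂ (measurableSet_singleton 0)
  have hABle : volume (A ∪ B) ≤ ENNReal.ofReal (ε * (2 + ω * Err)) := by
    calc volume (A ∪ B) ≤ volume A + volume B := measure_union_le _ _
      _ ≤ ENNReal.ofReal ε + ENNReal.ofReal (ε * (1 + ω * Err)) := by
          gcongr
          · rw [ENNReal.le_ofReal_iff_toReal_le (measure_ne_top _ _) hε0.le]
            exact hAle
          · rw [ENNReal.le_ofReal_iff_toReal_le (measure_ne_top _ _) (by positivity)]
            refine hBle.trans ?_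
            have : Err ≤ (ω : ℝ) * Err := le_mul_of_one_le_left hErr (by exact_mod_cast hω)
            nlinarith
      _ = ENNReal.ofReal (ε * (2 + ω * Err)) := by
          rw [← ENNReal.ofReal_add hε0.le (by positivity)]
          ring_nf
  rw [hcompl, measure_compl hABmeas (measure_ne_top _ _), measure_univ]
  calc ENNReal.ofReal (1 - ε * (2 + ω * Err))
      = ENNReal.ofReal 1 - ENNReal.ofReal (ε * (2 + ω * Err)) :=
        ENNReal.ofReal_sub _ (by positivity)
    _ ≤ 1 - volume (A ∪ B) := by
        rw [ENNReal.ofReal_one]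
        exact tsub_le_tsub_left hABle 1
end

section
/- Let S_K ⊆ O_K^× be a finite set closed under inversion and let c_S > 0 be a constant with c_S < h_∞(β) for every β ∈ O_K^× ∖ S_K. Then for every α ∈ K^× with N(α) ≥ 1, the number of units β ∈ O_K^× with h_∞(αβ) ≤ c_S/2 is at most #S_K. -/
open NumberField MeasureTheory
open scoped ENNReal Classical nonZeroDivisors

section Aux

variable (K : Type*) [Field K] [NumberField K]

lemma aux_prodAbs (x : K) :
    ∏ σ : K →+* ℂ, ‖σ x‖ = Nabs K x := by
  have h := congr_arg norm (Algebra.norm_eq_prod_embeddings ℚ ℂ x)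
  rw [norm_prod] at h
  rw [Fintype.prod_equiv (RingHom.equivRatAlgHom K ℂ) (fun σ => ‖σ x‖)
      (fun f => ‖f x‖) (fun _ => by simp [RingHom.equivRatAlgHom_apply]),
      ← h, eq_ratCast]
  rw [Nabs, Complex.norm_ratCast]

lemma aux_sumLog (x : K) (hx : x ≠ 0) :
    ∑ σ : K →+* ℂ, Real.log ‖σ x‖ = Real.log (Nabs K x) := by
  rw [← aux_prodAbs, Real.log_prod]
  intro σ _
  simp [map_eq_zero_iff σ (RingHom.injective σ), hx]

lemma aux_max_zero_neg (a : ℝ) : max 0 (-a) = max 0 a - a := by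
  rcases le_total 0 a with h | h
  · rw [max_eq_left (neg_nonpos.mpr h), max_eq_right h]; ring
  · rw [max_eq_right (neg_nonneg.mpr h), max_eq_left h]; ring

lemma aux_hInf_mul_le (x y : K) (hx : x ≠ 0) (hy : y ≠ 0) :
    hInf K (x * y) ≤ hInf K x + hInf K y := by
  unfold hInf
  rw [← mul_add, ← Finset.sum_add_distrib]
  have hd : (0:ℝ) ≤ (Module.finrank ℚ K : ℝ)⁻¹ := by positivity
  refine mul_le_mul_of_nonneg_left (Finset.sum_le_sum fun σ _ => ?_) hd
  have hxσ : ‖σ x‖ ≠ 0 := by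
    simp [map_eq_zero_iff σ (RingHom.injective σ), hx]
  have hyσ : ‖σ y‖ ≠ 0 := by
    simp [map_eq_zero_iff σ (RingHom.injective σ), hy]
  rw [map_mul, norm_mul, Real.log_mul hxσ hyσ]
  exact max_le (add_nonneg (le_max_left _ _) (le_max_left _ _))
    (add_le_add (le_max_right _ _) (le_max_right _ _))

lemma aux_hInf_inv (x : K) (hx : x ≠ 0) :
    hInf K x⁻¹ = hInf K x - (Module.finrank ℚ K : ℝ)⁻¹ * Real.log (Nabs K x) := by
  unfold hInf
  rw [← mul_sub]
  congr 1
  have : ∀ σ : K →+* ℂ, max 0 (Real.log ‖σ x⁻¹‖)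
      = max 0 (Real.log ‖σ x‖) - Real.log ‖σ x‖ := by
    intro σ
    rw [map_inv₀, norm_inv, Real.log_inv, aux_max_zero_neg]
  rw [Finset.sum_congr rfl fun σ _ => this σ, Finset.sum_sub_distrib, aux_sumLog K x hx]

lemma aux_Nabs_mul (x y : K) : Nabs K (x * y) = Nabs K x * Nabs K y := by
  unfold Nabs
  rw [map_mul]
  push_cast
  rw [abs_mul]

lemma aux_Nabs_unit (β : (𝓞 K)ˣ) : Nabs K (algebraMap (𝓞 K) K β) = 1 := by
  have h := NumberField.Units.norm K β
  unfold Nabs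
  have : (algebraMap (𝓞 K) K β : K) = (β : K) := rfl
  rw [this, ← Rat.cast_abs, h, Rat.cast_one]

lemma aux_unit_ne (β : (𝓞 K)ˣ) : algebraMap (𝓞 K) K (β : 𝓞 K) ≠ 0 := by
  have h : algebraMap (𝓞 K) K (β : 𝓞 K) * algebraMap (𝓞 K) K ((β⁻¹ : (𝓞 K)ˣ) : 𝓞 K) = 1 := by
    rw [← map_mul, ← Units.val_mul, mul_inv_cancel, Units.val_one, map_one]
  exact left_ne_zero_of_mul_eq_one h

lemma aux_unit_inv (β : (𝓞 K)ˣ) :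
    algebraMap (𝓞 K) K ((β⁻¹ : (𝓞 K)ˣ) : 𝓞 K) = (algebraMap (𝓞 K) K (β : 𝓞 K))⁻¹ := by
  refine eq_inv_of_mul_eq_one_left ?_
  rw [← map_mul, ← Units.val_mul, inv_mul_cancel, Units.val_one, map_one]

end Aux

theorem statement18 (K : Type*) [Field K] [NumberField K]
    (S : Finset ((𝓞 K)ˣ)) (hSinv : ∀ u ∈ S, u⁻¹ ∈ S)
    (cS : ℝ) (hcS0 : 0 < cS)
    (hcS : ∀ β : (𝓞 K)ˣ, β ∉ S → cS < hInf K (algebraMap (𝓞 K) K β))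
    (α : K) (hα : α ≠ 0) (hN : 1 ≤ Nabs K α) :
    {β : (𝓞 K)ˣ | hInf K (α * algebraMap (𝓞 K) K β) ≤ cS / 2}.Finite ∧
    Nat.card {β : (𝓞 K)ˣ | hInf K (α * algebraMap (𝓞 K) K β) ≤ cS / 2} ≤ S.card := by
  set T : Set ((𝓞 K)ˣ) := {β : (𝓞 K)ˣ | hInf K (α * algebraMap (𝓞 K) K β) ≤ cS / 2} with hT
  rcases Set.eq_empty_or_nonempty T with hTe | ⟨β₀, hβ₀⟩
  · rw [hTe]; simp
  -- the key claim
  have key : ∀ β ∈ T, β * β₀⁻¹ ∈ S := by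
    intro β hβ
    by_contra hmem
    have hgt := hcS _ hmem
    have hval : algebraMap (𝓞 K) K ((β * β₀⁻¹ : (𝓞 K)ˣ) : 𝓞 K)
        = (α * algebraMap (𝓞 K) K (β : 𝓞 K)) * (α * algebraMap (𝓞 K) K (β₀ : 𝓞 K))⁻¹ := by
      rw [Units.val_mul, map_mul, aux_unit_inv, mul_inv]
      field_simp [aux_unit_ne K β₀]
    set x := α * algebraMap (𝓞 K) K (β : 𝓞 K) with hxdef
    set y := α * algebraMap (𝓞 K) K (β₀ : 𝓞 K) with hydef
    have hx0 : x ≠ 0 := mul_ne_zero hα (aux_unit_ne K β)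
    have hy0 : y ≠ 0 := mul_ne_zero hα (aux_unit_ne K β₀)
    have hNy : Nabs K y = Nabs K α := by
      rw [hydef, aux_Nabs_mul, aux_Nabs_unit, mul_one]
    have hlog : 0 ≤ Real.log (Nabs K y) := by
      rw [hNy]; exact Real.log_nonneg hN
    have hd : (0:ℝ) ≤ (Module.finrank ℚ K : ℝ)⁻¹ := by positivity
    have h1 : hInf K (x * y⁻¹) ≤ hInf K x + hInf K y⁻¹ :=
      aux_hInf_mul_le K x y⁻¹ hx0 (inv_ne_zero hy0)
    have h2 : hInf K y⁻¹ ≤ hInf K y := by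
      rw [aux_hInf_inv K y hy0]
      nlinarith [mul_nonneg hd hlog]
    have hxT : hInf K x ≤ cS / 2 := hβ
    have hyT : hInf K y ≤ cS / 2 := hβ₀
    rw [hval] at hgt
    linarith
  -- finiteness and cardinality
  have hsub : T ⊆ (fun u => u * β₀) '' (S : Set ((𝓞 K)ˣ)) := by
    intro β hβ
    exact ⟨β * β₀⁻¹, key β hβ, by group⟩
  have hfin : ((fun u => u * β₀) '' (S : Set ((𝓞 K)ˣ))).Finite := S.finite_toSet.image _
  have hTfin : T.Finite := hfin.subset hsub
  refine ⟨hTfin, ?_⟩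
  have hinj : Function.Injective (fun u : (𝓞 K)ˣ => u * β₀) := fun a b h => by
    simpa using mul_right_cancel h
  calc Nat.card T = T.ncard := Nat.card_coe_set_eq T
    _ ≤ ((fun u => u * β₀) '' (S : Set ((𝓞 K)ˣ))).ncard := Set.ncard_le_ncard hsub hfin
    _ = (S : Set ((𝓞 K)ˣ)).ncard := Set.ncard_image_of_injective _ hinj
    _ = S.card := Set.ncard_coe_finset S
end
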